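/- arXiv:2601.22435 — 3 statements merged into one kernel-verified Lean document; each statement's English description precedes it below -/
import Mathlib

section
/- Suppose 𝕂 is a computable age with JEP. Then 𝕂 has CJEP(d), where d is the Turing degree of EmbedInfo(𝕂). -/
/- Self-contained framework for computable ages and cofinal Fraïssé limits. -/

namespace CFL

open Classical

/-! ### Oracle computability -/

/-- The characteristic partial function of a set of naturals. -/
noncomputable def chi (A : Set ℕ) : ℕ →. ℕ :=
  fun n => Part.some (if n ∈ A then 1 else 0)

/-- Codes for oracle partial recursive functions. -/
inductive OCode : Type
  | zero : OCode
  | succ : OCode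
  | left : OCode
  | right : OCode
  | oracle : OCode
  | pair : OCode → OCode → OCode
  | comp : OCode → OCode → OCode
  | prec : OCode → OCode → OCode
  | rfind' : OCode → OCode

/-- Evaluation of an oracle code relative to an oracle `O`. -/
def OCode.eval (O : ℕ →. ℕ) : OCode → ℕ →. ℕ
  | OCode.zero => pure 0
  | OCode.succ => Nat.succ
  | OCode.left => ↑fun n : ℕ => n.unpair.1
  | OCode.right => ↑fun n : ℕ => n.unpair.2
  | OCode.oracle => O
  | OCode.pair cf cg => fun n => Nat.pair <$> OCode.eval O cf n <*> OCode.eval O cg n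
  | OCode.comp cf cg => fun n => OCode.eval O cg n >>= OCode.eval O cf
  | OCode.prec cf cg =>
    Nat.unpaired fun a n =>
      n.rec (OCode.eval O cf a) fun y IH => do
        let i ← IH
        OCode.eval O cg (Nat.pair a (Nat.pair y i))
  | OCode.rfind' cf =>
    Nat.unpaired fun a m =>
      (Nat.rfind fun n => (fun m => m = 0) <$> OCode.eval O cf (Nat.pair a (n + m))).map
        (· + m)

/-- A numerical code of an `OCode`. -/
def OCode.encodeCode : OCode → ℕ
  | OCode.zero => 0
  | OCode.succ => 1
  | OCode.left => 2
  | OCode.right => 3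
  | OCode.oracle => 4
  | OCode.pair cf cg => 4 * Nat.pair cf.encodeCode cg.encodeCode + 5
  | OCode.comp cf cg => 4 * Nat.pair cf.encodeCode cg.encodeCode + 6
  | OCode.prec cf cg => 4 * Nat.pair cf.encodeCode cg.encodeCode + 7
  | OCode.rfind' cf => 4 * cf.encodeCode + 8

/-- `f` is a partial function recursive in the oracle set `O`. -/
def RecFunIn (O : Set ℕ) (f : ℕ →. ℕ) : Prop :=
  ∃ c : OCode, OCode.eval (chi O) c = f

/-- The code `c` computes the total function `f` relative to the oracle set `O`. -/
def ComputesIn (O : Set ℕ) (c : OCode) (f : ℕ → ℕ) : Prop :=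
  ∀ n, OCode.eval (chi O) c n = Part.some (f n)

/-- `f` is a total function computable in the oracle set `O`. -/
def TotalComputableIn (O : Set ℕ) (f : ℕ → ℕ) : Prop :=
  ∃ c : OCode, ComputesIn O c f

/-- The set `A` is computable in the oracle set `O`. -/
def SetRecIn (O A : Set ℕ) : Prop := RecFunIn O (chi A)

/-- Turing reducibility (on sets of naturals, regarded as representatives of
Turing degrees). -/
def TuringLE (A B : Set ℕ) : Prop := SetRecIn B A

/-- The set `A` is computably enumerable in the oracle set `O`. -/
def CEIn (O A : Set ℕ) : Prop :=
  ∃ c : OCode, ∀ n, n ∈ A ↔ (OCode.eval (chi O) c n).Dom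

/-- The Turing jump of a set of naturals. -/
def jump (O : Set ℕ) : Set ℕ :=
  { e | ∃ c : OCode, c.encodeCode = (Nat.unpair e).1 ∧
      (OCode.eval (chi O) c (Nat.unpair e).2).Dom }

/-- `0'`, the jump of the least degree. -/
def zeroJump : Set ℕ := jump ∅

/-- `0''`. -/
def zeroJump2 : Set ℕ := jump zeroJump

/-- `0'''`. -/
def zeroJump3 : Set ℕ := jump zeroJump2

/-! ### Languages and structures -/

/-- A (coded) first-order language: `relArity r = some k` means that `r` is the code of a
relation symbol of arity `k`, and similarly for function symbols. -/
structure Lang where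
  relArity : ℕ → Option ℕ
  funArity : ℕ → Option ℕ

/-- The language is computably represented. -/
def Lang.ComputableRep (L : Lang) : Prop :=
  TotalComputableIn ∅ (fun r => Encodable.encode (L.relArity r)) ∧
  TotalComputableIn ∅ (fun f => Encodable.encode (L.funArity f))

/-- A finite relational language. -/
def Lang.FiniteRelational (L : Lang) : Prop :=
  (∀ f, L.funArity f = none) ∧ { r | (L.relArity r).isSome = true }.Finite

/-- A finite language. -/
def Lang.FiniteLang (L : Lang) : Prop :=
  { r | (L.relArity r).isSome = true }.Finite ∧
  { f | (L.funArity f).isSome = true }.Finite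

/-- An `L`-structure with underlying set a set of naturals. -/
structure Str (L : Lang) where
  dom : Set ℕ
  rel : ℕ → List ℕ → Prop
  fn : ℕ → List ℕ → ℕ
  rel_valid : ∀ r as, rel r as → L.relArity r = some as.length ∧ ∀ x ∈ as, x ∈ dom
  fn_mem : ∀ f as, L.funArity f = some as.length → (∀ x ∈ as, x ∈ dom) → fn f as ∈ dom

variable {L : Lang}

/-- The (finite) tuple `as` lies in the structure `A`. -/
def TupleIn (A : Str L) (as : List ℕ) : Prop := ∀ x ∈ as, x ∈ A.dom

/-- Membership in the substructure of `A` generated by the tuple `s`. -/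
inductive InClosure (A : Str L) (s : List ℕ) : ℕ → Prop
  | base {x : ℕ} : x ∈ s → x ∈ A.dom → InClosure A s x
  | fn (f : ℕ) (as : List ℕ) : L.funArity f = some as.length →
      (∀ x ∈ as, InClosure A s x) → InClosure A s (A.fn f as)

theorem InClosure.mem_dom {A : Str L} {s : List ℕ} {x : ℕ}
    (h : InClosure A s x) : x ∈ A.dom := by
  induction h with
  | base _ hx => exact hx
  | fn f as ha _ ih => exact A.fn_mem f as ha ih

/-- The substructure of `A` generated by the tuple `s`. -/
def Str.sub (A : Str L) (s : List ℕ) : Str L where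
  dom := { x | InClosure A s x }
  rel r as := A.rel r as ∧ ∀ x ∈ as, InClosure A s x
  fn := A.fn
  rel_valid := fun r as h => ⟨(A.rel_valid r as h.1).1, h.2⟩
  fn_mem := fun f as ha hm => InClosure.fn f as ha hm

/-- `h` is an embedding of `A` into `B`. -/
def IsEmbMap (A B : Str L) (h : ℕ → ℕ) : Prop :=
  (∀ x ∈ A.dom, h x ∈ B.dom) ∧
  (∀ x ∈ A.dom, ∀ y ∈ A.dom, h x = h y → x = y) ∧
  (∀ r as, TupleIn A as → (A.rel r as ↔ B.rel r (as.map h))) ∧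
  (∀ f as, L.funArity f = some as.length → TupleIn A as →
    h (A.fn f as) = B.fn f (as.map h))

/-- `A` embeds into `B`. -/
def Embeds (A B : Str L) : Prop := ∃ h, IsEmbMap A B h

/-- `h` is an isomorphism of `A` onto `B`. -/
def IsIsoMap (A B : Str L) (h : ℕ → ℕ) : Prop :=
  IsEmbMap A B h ∧ ∀ y ∈ B.dom, ∃ x ∈ A.dom, h x = y

/-- `A` and `B` are isomorphic. -/
def Isom (A B : Str L) : Prop := ∃ h, IsIsoMap A B h

/-- `as ∼cl bs`: the coordinatewise map extends to an isomorphism of generated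
substructures. -/
def ClSim (A : Str L) (as : List ℕ) (B : Str L) (bs : List ℕ) : Prop :=
  ∃ h : ℕ → ℕ, as.map h = bs ∧ IsIsoMap (A.sub as) (B.sub bs) h

/-- `as ∼tuple bs`: equal length and the same pattern of equalities among coordinates. -/
def TupleSim (as bs : List ℕ) : Prop :=
  ∃ h h' : ℕ → ℕ, as.map h = bs ∧ bs.map h' = as

/-- `A` is finitely generated. -/
def Str.FG (A : Str L) : Prop :=
  ∃ s : List ℕ, TupleIn A s ∧ ∀ x, x ∈ A.dom ↔ InClosure A s x

/-- `g` is an automorphism of `M`. -/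
def IsAutoOf (M : Str L) (g : ℕ → ℕ) : Prop := IsIsoMap M M g

/-! ### Ages (as isomorphism-closed classes) -/

/-- `B` belongs to the age of `M`, i.e. `B` is isomorphic to a finitely generated
substructure of `M`. -/
def AgeMemOf (M : Str L) (B : Str L) : Prop :=
  ∃ as : List ℕ, TupleIn M as ∧ Isom B (M.sub as)

/-- The age of a structure `M`. -/
def ageOf (M : Str L) : Set (Str L) := { B | AgeMemOf M B }

/-- The hereditary property. -/
def HP (C : Set (Str L)) : Prop :=
  ∀ B ∈ C, ∀ as : List ℕ, TupleIn B as → B.sub as ∈ C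

/-- The joint embedding property. -/
def JEP (C : Set (Str L)) : Prop :=
  ∀ A ∈ C, ∀ B ∈ C, ∃ D ∈ C, Embeds A D ∧ Embeds B D

/-- Every pair of embeddings with domain `A` into members of `C` can be amalgamated
over `A` inside `C`. -/
def AmalgamatesOver (C : Set (Str L)) (A : Str L) : Prop :=
  ∀ B₀ ∈ C, ∀ B₁ ∈ C, ∀ f₀ f₁ : ℕ → ℕ, IsEmbMap A B₀ f₀ → IsEmbMap A B₁ f₁ →
    ∃ D ∈ C, ∃ g₀ g₁ : ℕ → ℕ, IsEmbMap B₀ D g₀ ∧ IsEmbMap B₁ D g₁ ∧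
      ∀ x ∈ A.dom, g₀ (f₀ x) = g₁ (f₁ x)

/-- The amalgamation property. -/
def AP (C : Set (Str L)) : Prop := ∀ A ∈ C, AmalgamatesOver C A

/-- `A` is an amalgamation base of the class `C`. -/
def AmalgBase (C : Set (Str L)) (A : Str L) : Prop := A ∈ C ∧ AmalgamatesOver C A

/-- The cofinal amalgamation property. -/
def CoAP (C : Set (Str L)) : Prop :=
  ∀ A ∈ C, ∃ A' : Str L, AmalgBase C A' ∧ Embeds A A'

/-! ### Computable ages -/

/-- An (abstract) enumerated age: for each index `i`, a generating tuple `tup i` and the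
structure `str i` it generates. -/
structure CompAge (L : Lang) where
  tup : ℕ → List ℕ
  str : ℕ → Str L
  tup_mem : ∀ i, TupleIn (str i) (tup i)
  gen : ∀ i x, x ∈ (str i).dom ↔ InClosure (str i) (tup i) x

/-- The class of structures represented by the enumerated age `K`. -/
def CompAge.cls (K : CompAge L) : Set (Str L) := { B | ∃ i, Isom B (K.str i) }

/-- The structure `M` is computable in the oracle set `s`. -/
def StrComputableIn (s : Set ℕ) (M : Str L) : Prop :=
  SetRecIn s M.dom ∧
  SetRecIn s { p | ∃ r as, TupleIn M as ∧ M.rel r as ∧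
      p = Nat.pair r (Encodable.encode as) } ∧
  SetRecIn s { p | ∃ f as b, L.funArity f = some as.length ∧ TupleIn M as ∧
      M.fn f as = b ∧ p = Nat.pair f (Nat.pair (Encodable.encode as) b) }

/-- The coded diagram of an enumerated age. -/
def CompAge.diag (K : CompAge L) : Set ℕ :=
  { p | ∃ i, p = Nat.pair 0 (Nat.pair i (Encodable.encode (K.tup i))) } ∪
  { p | ∃ i x, x ∈ (K.str i).dom ∧ p = Nat.pair 1 (Nat.pair i x) } ∪
  { p | ∃ i r as, TupleIn (K.str i) as ∧ (K.str i).rel r as ∧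
      p = Nat.pair 2 (Nat.pair i (Nat.pair r (Encodable.encode as))) } ∪
  { p | ∃ i r as, TupleIn (K.str i) as ∧ L.relArity r = some as.length ∧
      ¬ (K.str i).rel r as ∧
      p = Nat.pair 3 (Nat.pair i (Nat.pair r (Encodable.encode as))) } ∪
  { p | ∃ i f as b, TupleIn (K.str i) as ∧ L.funArity f = some as.length ∧
      (K.str i).fn f as = b ∧
      p = Nat.pair 4 (Nat.pair i (Nat.pair f (Nat.pair (Encodable.encode as) b))) }

/-- `K` is an `s`-computable age: its diagram is c.e. in `s` and each of its structures
is computable in `s`. -/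
def AgeComputableIn (s : Set ℕ) (K : CompAge L) : Prop :=
  CEIn s K.diag ∧ ∀ i, StrComputableIn s (K.str i)

/-- The embedding information of an enumerated age, as a set of naturals. -/
def EmbedInfo (K : CompAge L) : Set ℕ :=
  { p | ∃ k₀ b₀ k₁ b₁, TupleIn (K.str k₀) b₀ ∧ TupleIn (K.str k₁) b₁ ∧
      ClSim (K.str k₀) b₀ (K.str k₁) b₁ ∧
      p = Nat.pair k₀ (Nat.pair (Encodable.encode b₀)
            (Nat.pair k₁ (Encodable.encode b₁))) }

/-! ### Potential embeddings, spans, and amalgamation diagrams -/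

/-- A potential embedding: a pair of indices and a tuple in the codomain structure. -/
structure PotEmb where
  i : ℕ
  j : ℕ
  c : List ℕ

/-- A numerical code of a potential embedding. -/
def PotEmb.code (F : PotEmb) : ℕ :=
  Nat.pair F.i (Nat.pair F.j (Encodable.encode F.c))

/-- The potential embedding is well-formed with respect to `K`. -/
def PotEmb.Valid (K : CompAge L) (F : PotEmb) : Prop :=
  F.c.length = (K.tup F.i).length ∧ TupleIn (K.str F.j) F.c

/-- The potential embedding is an embedding. -/
def PotEmb.IsEmb (K : CompAge L) (F : PotEmb) : Prop :=
  ClSim (K.str F.i) (K.tup F.i) (K.str F.j) F.c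

/-- The potential embedding is an isomorphism (its range generates the codomain). -/
def PotEmb.IsIso (K : CompAge L) (F : PotEmb) : Prop :=
  F.IsEmb K ∧ ∀ x ∈ (K.str F.j).dom, InClosure (K.str F.j) F.c x

/-- `h` realizes the potential embedding `F` as a map on the domain structure. -/
def ExtMap (K : CompAge L) (F : PotEmb) (h : ℕ → ℕ) : Prop :=
  (K.tup F.i).map h = F.c ∧ IsEmbMap (K.str F.i) (K.str F.j) h

/-- `(F₀, F₁)` is a potential span. -/
def PotSpan (K : CompAge L) (F₀ F₁ : PotEmb) : Prop :=
  F₀.Valid K ∧ F₁.Valid K ∧ F₀.i = F₁.i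

/-- `(G₀, G₁)` is an amalgamation diagram over the potential span `(F₀, F₁)`. -/
def AmalgDiagOver (K : CompAge L) (F₀ F₁ G₀ G₁ : PotEmb) : Prop :=
  G₀.Valid K ∧ G₁.Valid K ∧ G₀.IsEmb K ∧
  G₀.i = F₀.j ∧ G₁.i = F₁.j ∧ G₀.j = G₁.j ∧
  (F₀.IsEmb K → F₁.IsEmb K → G₁.IsEmb K ∧
    ∀ h₀ h₁ : ℕ → ℕ, ExtMap K G₀ h₀ → ExtMap K G₁ h₁ →
      F₀.c.map h₀ = F₁.c.map h₁)

/-- `H` is the composition `F ∘ G` of potential embeddings (where `F` is an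
embedding realized by any `h` extending it). -/
def CompRel (K : CompAge L) (F G H : PotEmb) : Prop :=
  G.j = F.i ∧ H.i = G.i ∧ H.j = F.j ∧
  ∀ h : ℕ → ℕ, ExtMap K F h → H.c = G.c.map h

/-! ### Computable versions of HP, JEP, AP, coAP -/

/-- The `s`-computable hereditary property. -/
def CHP (s : Set ℕ) (K : CompAge L) : Prop :=
  ∃ c : OCode, ∀ i (b : List ℕ), TupleIn (K.str i) b →
    ∃ j, OCode.eval (chi s) c (Nat.pair i (Encodable.encode b)) = Part.some j ∧
      ClSim (K.str j) (K.tup j) (K.str i) b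

/-- The `s`-computable joint embedding property. -/
def CJEP (s : Set ℕ) (K : CompAge L) : Prop :=
  ∃ c : OCode, ∀ i j : ℕ, ∃ F G : PotEmb,
    OCode.eval (chi s) c (Nat.pair i j) = Part.some (Nat.pair F.code G.code) ∧
    F.Valid K ∧ G.Valid K ∧ F.IsEmb K ∧ G.IsEmb K ∧
    F.i = i ∧ G.i = j ∧ F.j = G.j

/-- The `s`-computable amalgamation property. -/
def CAP (s : Set ℕ) (K : CompAge L) : Prop :=
  ∃ c : OCode, ∀ F₀ F₁ : PotEmb, PotSpan K F₀ F₁ →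
    ∃ G₀ G₁ : PotEmb,
      OCode.eval (chi s) c (Nat.pair F₀.code F₁.code) =
        Part.some (Nat.pair G₀.code G₁.code) ∧
      AmalgDiagOver K F₀ F₁ G₀ G₁

/-- A family `W` of distinguished embeddings with amalgamation-base codomains, closed
under pre/post composition with isomorphisms, covering all domains. -/
def IsCoAPFamily (K : CompAge L) (W : Set PotEmb) : Prop :=
  (∀ F ∈ W, F.Valid K ∧ F.IsEmb K ∧ AmalgBase K.cls (K.str F.j)) ∧
  (∀ F ∈ W, ∀ G H : PotEmb, G.Valid K → G.IsIso K → G.j = F.i →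
      CompRel K F G H → H ∈ W) ∧
  (∀ F ∈ W, ∀ G H : PotEmb, G.Valid K → G.IsIso K → G.i = F.j →
      CompRel K G F H → H ∈ W) ∧
  (∀ i : ℕ, ∃ F ∈ W, F.i = i)

/-- The `s`-computable cofinal amalgamation property: there is an `s`-c.e. family of
distinguished embeddings onto amalgamation bases together with an `s`-computable
amalgamation function. -/
def CcoAP (s : Set ℕ) (K : CompAge L) : Prop :=
  ∃ W : Set PotEmb, IsCoAPFamily K W ∧
    CEIn s { p | ∃ F ∈ W, p = F.code } ∧
    ∃ c : OCode, ∀ F ∈ W, ∀ G₀ G₁ : PotEmb,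
      G₀.Valid K → G₁.Valid K → G₀.i = F.j → G₁.i = F.j →
      ∃ D₀ D₁ : PotEmb,
        OCode.eval (chi s) c (Nat.pair F.code (Nat.pair G₀.code G₁.code)) =
          Part.some (Nat.pair D₀.code D₁.code) ∧
        AmalgDiagOver K G₀ G₁ D₀ D₁

/-! ### Ultrahomogeneity -/

/-- `M` is ultrahomogeneous: every isomorphism between finitely generated substructures
extends to an automorphism. -/
def Ultrahomogeneous (M : Str L) : Prop :=
  ∀ as bs : List ℕ, TupleIn M as → TupleIn M bs → ClSim M as M bs →
    ∃ g : ℕ → ℕ, IsAutoOf M g ∧ as.map g = bs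

/-- `g` is a bijection of the underlying set of `M` with itself. -/
def BijOnDom (M : Str L) (g : ℕ → ℕ) : Prop :=
  (∀ x ∈ M.dom, g x ∈ M.dom) ∧
  (∀ x ∈ M.dom, ∀ y ∈ M.dom, g x = g y → x = y) ∧
  (∀ y ∈ M.dom, ∃ x ∈ M.dom, g x = y)

/-- `M` is `s`-computably ultrahomogeneous. -/
def CompUltrahom (s : Set ℕ) (M : Str L) : Prop :=
  ∃ c : OCode, ∀ as bs : List ℕ, TupleIn M as → TupleIn M bs →
    as.length = bs.length →
    ∃ e : ℕ,
      OCode.eval (chi s) c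
          (Nat.pair (Encodable.encode as) (Encodable.encode bs)) = Part.some e ∧
      ∃ c' : OCode, c'.encodeCode = e ∧ ∃ g : ℕ → ℕ, ComputesIn s c' g ∧
        BijOnDom M g ∧
        (ClSim M as M bs → IsAutoOf M g ∧ as.map g = bs)

/-! ### Cofinal ultrahomogeneity -/

/-- `M` is cofinally ultrahomogeneous. -/
def CofinallyUltrahomogeneous (M : Str L) : Prop :=
  ∀ as : List ℕ, TupleIn M as → ∃ bs : List ℕ, TupleIn M bs ∧
    (∀ x ∈ as, InClosure M bs x) ∧
    ∀ cs : List ℕ, TupleIn M cs → ClSim M bs M cs →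
      ∃ g : ℕ → ℕ, IsAutoOf M g ∧ bs.map g = cs

/-- `E` is a cofinal collection of tuples in `M`. -/
def IsCofinalCollection (M : Str L) (E : Set (List ℕ)) : Prop :=
  (∀ bs ∈ E, TupleIn M bs) ∧
  (∀ as : List ℕ, TupleIn M as → ∃ bs ∈ E, ∀ x ∈ as, InClosure M bs x) ∧
  (∀ bs ∈ E, ∀ as : List ℕ, (∀ x ∈ as, InClosure M bs x) → (as ++ bs) ∈ E) ∧
  (∀ as ∈ E, ∀ bs : List ℕ, TupleIn M bs → ClSim M as M bs → bs ∈ E)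

/-- `M` is cofinally ultrahomogeneous for the collection `E`: every isomorphism between
substructures generated by members of `E` extends to an automorphism. -/
def CofUltraFor (M : Str L) (E : Set (List ℕ)) : Prop :=
  ∀ as ∈ E, ∀ bs ∈ E, ClSim M as M bs →
    ∃ g : ℕ → ℕ, IsAutoOf M g ∧ as.map g = bs

/-- The set of codes of members of `E`. -/
def ECodes (E : Set (List ℕ)) : Set ℕ := { p | ∃ as ∈ E, p = Encodable.encode as }

/-- The functional part of `s`-computable cofinal ultrahomogeneity with respect to `E`. -/
def CofUltraFunIn (s : Set ℕ) (M : Str L) (E : Set (List ℕ)) : Prop :=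
  ∃ c : OCode, ∀ as ∈ E, ∀ bs : List ℕ, TupleIn M bs → TupleSim as bs →
    ∃ e : ℕ,
      OCode.eval (chi s) c
          (Nat.pair (Encodable.encode as) (Encodable.encode bs)) = Part.some e ∧
      ∃ c' : OCode, c'.encodeCode = e ∧ ∃ g : ℕ → ℕ, ComputesIn s c' g ∧
        BijOnDom M g ∧ as.map g = bs ∧
        (ClSim M as M bs → IsAutoOf M g)

/-- `M` is `s`-computably cofinally ultrahomogeneous with respect to `E`. -/
def CompCofUltrahomWrt (s : Set ℕ) (M : Str L) (E : Set (List ℕ)) : Prop :=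
  IsCofinalCollection M E ∧ SetRecIn s (ECodes E) ∧ CofUltraFunIn s M E

/-- `M` is `s`-computably cofinally ultrahomogeneous. -/
def CompCofUltrahom (s : Set ℕ) (M : Str L) : Prop :=
  ∃ E : Set (List ℕ), CompCofUltrahomWrt s M E

/-- The `s`-computable cofinal extension property with respect to `E`. -/
def CompCofExtProp (s : Set ℕ) (M : Str L) (E : Set (List ℕ)) : Prop :=
  ∃ c : OCode, ∀ as bs cs : List ℕ, as ∈ E → cs ∈ E → TupleIn M bs →
    (∀ x ∈ as, InClosure M cs x) → TupleSim as bs →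
    ∃ ds : List ℕ,
      OCode.eval (chi s) c
          (Nat.pair (Encodable.encode as)
            (Nat.pair (Encodable.encode bs) (Encodable.encode cs))) =
        Part.some (Encodable.encode ds) ∧
      TupleIn M ds ∧ TupleSim (as ++ cs) (bs ++ ds) ∧
      (ClSim M as M bs →
        ClSim M ds M cs ∧ (∀ x ∈ bs, InClosure M ds x) ∧
        ∀ h h' : ℕ → ℕ,
          ds.map h = cs → IsIsoMap (M.sub ds) (M.sub cs) h →
          bs.map h' = as → IsIsoMap (M.sub bs) (M.sub as) h' →
          bs.map h = bs.map h')

/-! ### Canonical ages and limits -/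

/-- `K` is a canonical age of `M` (relative to the oracle `t`): the enumeration of
generating tuples is `t`-computable, lists every finite tuple of `M` infinitely often,
and `str i` is the substructure generated by `tup i`. -/
def IsCanonicalAgeOf (t : Set ℕ) (K : CompAge L) (M : Str L) : Prop :=
  TotalComputableIn t (fun i => Encodable.encode (K.tup i)) ∧
  (∀ i, TupleIn M (K.tup i)) ∧
  (∀ as : List ℕ, TupleIn M as → ∀ n : ℕ, ∃ i, n ≤ i ∧ K.tup i = as) ∧
  (∀ i, K.str i = M.sub (K.tup i))

/-- `K` represents the age of `M`. -/
def RepresentsAgeOf (K : CompAge L) (M : Str L) : Prop :=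
  (∀ i, AgeMemOf M (K.str i)) ∧
  (∀ B : Str L, AgeMemOf M B → ∃ i, Isom B (K.str i))

/-- `M` is a cofinal Fraïssé limit of (the age represented by) `K`. -/
def CofinalFraisseLimitOf (K : CompAge L) (M : Str L) : Prop :=
  CofinallyUltrahomogeneous M ∧ RepresentsAgeOf K M

/-- The enumerated age `K` is uniformly finite. -/
def UniformlyFinite (K : CompAge L) : Prop :=
  L.FiniteLang ∧ ∃ f : ℕ → ℕ, TotalComputableIn ∅ f ∧
    ∀ i, ∀ as : List ℕ, TupleIn (K.str i) as →
      { x | InClosure (K.str i) as x }.Finite ∧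
      { x | InClosure (K.str i) as x }.ncard ≤ f as.length


/-! ### Auxiliary lemmas for Statement 12 -/

section Aux

variable {L : Lang}

theorem isEmbMap_id (A : Str L) : IsEmbMap A A id :=
  ⟨fun _ hx => hx, fun _ _ _ _ h => h,
   fun r as _ => by simp, fun f as _ _ => by simp⟩

theorem isom_refl (A : Str L) : Isom A A :=
  ⟨id, isEmbMap_id A, fun y hy => ⟨y, hy, rfl⟩⟩

theorem str_mem_cls (K : CompAge L) (i : ℕ) : K.str i ∈ K.cls :=
  ⟨i, isom_refl _⟩

theorem isEmbMap_comp {A B C : Str L} {f g : ℕ → ℕ}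
    (hf : IsEmbMap A B f) (hg : IsEmbMap B C g) : IsEmbMap A C (g ∘ f) := by
  obtain ⟨f1, f2, f3, f4⟩ := hf
  obtain ⟨g1, g2, g3, g4⟩ := hg
  refine ⟨fun x hx => g1 _ (f1 _ hx),
    fun x hx y hy h => f2 _ hx _ hy (g2 _ (f1 _ hx) _ (f1 _ hy) h),
    fun r as has => ?_, fun fn as ha has => ?_⟩
  · have : TupleIn B (as.map f) := fun y hy => by
      obtain ⟨x, hx, rfl⟩ := List.mem_map.1 hy; exact f1 _ (has _ hx)
    rw [f3 r as has, g3 r (as.map f) this, List.map_map]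
  · have hlen : L.funArity fn = some (as.map f).length := by simpa using ha
    have : TupleIn B (as.map f) := fun y hy => by
      obtain ⟨x, hx, rfl⟩ := List.mem_map.1 hy; exact f1 _ (has _ hx)
    calc (g ∘ f) (A.fn fn as) = g (f (A.fn fn as)) := rfl
      _ = g (B.fn fn (as.map f)) := by rw [f4 fn as ha has]
      _ = C.fn fn ((as.map f).map g) := g4 fn (as.map f) hlen this
      _ = C.fn fn (as.map (g ∘ f)) := by rw [List.map_map]

theorem inClosure_map {A B : Str L} {h : ℕ → ℕ} (he : IsEmbMap A B h)
    {s : List ℕ} {x : ℕ} (hx : InClosure A s x) :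
    InClosure B (s.map h) (h x) := by
  induction hx with
  | base hm hd => exact InClosure.base (List.mem_map_of_mem (f := h) hm) (he.1 _ hd)
  | fn f as ha hall ih =>
    have htup : TupleIn A as := fun y hy => (hall y hy).mem_dom
    have := he.2.2.2 f as ha htup
    rw [this]
    exact InClosure.fn f (as.map h) (by simpa using ha)
      (fun y hy => by obtain ⟨x, hx, rfl⟩ := List.mem_map.1 hy; exact ih x hx)

theorem inClosure_preimage {A B : Str L} {h : ℕ → ℕ} (he : IsEmbMap A B h)
    {s : List ℕ} (hs : TupleIn A s) {y : ℕ}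
    (hy : InClosure B (s.map h) y) : ∃ x, InClosure A s x ∧ h x = y := by
  induction hy with
  | base hm hd =>
    obtain ⟨x, hx, rfl⟩ := List.mem_map.1 hm
    exact ⟨x, InClosure.base hx (hs _ hx), rfl⟩
  | fn f bs ha hall ih =>
    have : ∀ y ∈ bs, ∃ x, InClosure A s x ∧ h x = y := ih
    choose φ hφ1 hφ2 using fun y (hy : y ∈ bs) => this y hy
    -- build the preimage list
    classical
    let ψ : ℕ → ℕ := fun y => if hy : y ∈ bs then φ y hy else 0
    have hmap : (bs.map ψ).map h = bs := by
      rw [List.map_map]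
      refine (List.map_congr_left ?_).trans (List.map_id _)
      intro y hy
      simp only [Function.comp_apply, ψ, dif_pos hy]
      exact hφ2 y hy
    have hcls : ∀ x ∈ bs.map ψ, InClosure A s x := by
      intro x hx
      obtain ⟨y, hy, rfl⟩ := List.mem_map.1 hx
      simpa only [ψ, dif_pos hy] using hφ1 y hy
    have hlen : L.funArity f = some (bs.map ψ).length := by simpa using ha
    refine ⟨A.fn f (bs.map ψ), InClosure.fn f _ hlen hcls, ?_⟩
    rw [he.2.2.2 f (bs.map ψ) hlen (fun x hx => (hcls x hx).mem_dom), hmap]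

theorem clSim_of_emb {A B : Str L} {h : ℕ → ℕ} (he : IsEmbMap A B h)
    {s : List ℕ} (hs : TupleIn A s) : ClSim A s B (s.map h) := by
  refine ⟨h, rfl, ⟨⟨fun x hx => inClosure_map he hx,
    fun x hx y hy hxy => he.2.1 x (InClosure.mem_dom hx) y (InClosure.mem_dom hy) hxy,
    fun r as has => ?_, fun f as ha has => ?_⟩,
    fun y hy => inClosure_preimage he hs hy⟩⟩
  · have htup : TupleIn A as := fun x hx => (has x hx).mem_dom
    constructor
    · rintro ⟨hr, hcl⟩
      exact ⟨(he.2.2.1 r as htup).1 hr,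
        fun y hy => by obtain ⟨x, hx, rfl⟩ := List.mem_map.1 hy
                       exact inClosure_map he (hcl x hx)⟩
    · rintro ⟨hr, _⟩
      exact ⟨(he.2.2.1 r as htup).2 hr, has⟩
  · exact he.2.2.2 f as ha (fun x hx => (has x hx).mem_dom)

/-- Existence of the JEP witness data for a pair of indices. -/
theorem exists_jep_witness (K : CompAge L) (hJEP : JEP K.cls) (i j : ℕ) :
    ∃ k : ℕ, ∃ c d : List ℕ, TupleIn (K.str k) c ∧ TupleIn (K.str k) d ∧
      ClSim (K.str i) (K.tup i) (K.str k) c ∧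
      ClSim (K.str j) (K.tup j) (K.str k) d := by
  obtain ⟨D, hD, ⟨f, hf⟩, ⟨g, hg⟩⟩ := hJEP _ (str_mem_cls K i) _ (str_mem_cls K j)
  obtain ⟨k, e, he⟩ := hD
  have h1 : IsEmbMap (K.str i) (K.str k) (e ∘ f) := isEmbMap_comp hf he.1
  have h2 : IsEmbMap (K.str j) (K.str k) (e ∘ g) := isEmbMap_comp hg he.1
  refine ⟨k, (K.tup i).map (e ∘ f), (K.tup j).map (e ∘ g), ?_, ?_, ?_, ?_⟩
  · intro y hy; obtain ⟨x, hx, rfl⟩ := List.mem_map.1 hy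
    exact h1.1 _ (K.tup_mem i _ hx)
  · intro y hy; obtain ⟨x, hx, rfl⟩ := List.mem_map.1 hy
    exact h2.1 _ (K.tup_mem j _ hx)
  · exact clSim_of_emb h1 (K.tup_mem i)
  · exact clSim_of_emb h2 (K.tup_mem j)

theorem tup_code_unique (K : CompAge L) {i m : ℕ}
    (h : Nat.pair 0 (Nat.pair i m) ∈ K.diag) :
    m = Encodable.encode (K.tup i) := by
  rcases h with ((((⟨i', hp⟩ | ⟨_, _, _, hp⟩) | ⟨_, _, _, _, _, hp⟩) |
      ⟨_, _, _, _, _, _, hp⟩) | ⟨_, _, _, _, _, _, _, hp⟩)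
  · obtain ⟨h0, h1⟩ := Nat.pair_eq_pair.1 hp
    obtain ⟨h2, h3⟩ := Nat.pair_eq_pair.1 h1
    subst h2; exact h3
  all_goals simp [Nat.pair_eq_pair] at hp

theorem tup_code_mem (K : CompAge L) (i : ℕ) :
    Nat.pair 0 (Nat.pair i (Encodable.encode (K.tup i))) ∈ K.diag :=
  Or.inl (Or.inl (Or.inl (Or.inl ⟨i, rfl⟩)))

theorem embedInfo_query (K : CompAge L) (i k cc : ℕ) :
    Nat.pair i (Nat.pair (Encodable.encode (K.tup i)) (Nat.pair k cc)) ∈ EmbedInfo K ↔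
    ∃ c : List ℕ, Encodable.encode c = cc ∧ TupleIn (K.str k) c ∧
      ClSim (K.str i) (K.tup i) (K.str k) c := by
  constructor
  · rintro ⟨k₀, b₀, k₁, b₁, ht0, ht1, hcl, hp⟩
    obtain ⟨h1, h2⟩ := Nat.pair_eq_pair.1 hp
    obtain ⟨h3, h4⟩ := Nat.pair_eq_pair.1 h2
    obtain ⟨h5, h6⟩ := Nat.pair_eq_pair.1 h4
    subst h1; subst h5
    have : b₀ = K.tup i := Encodable.encode_injective h3.symm
    subst this
    exact ⟨b₁, h6.symm, ht1, hcl⟩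
  · rintro ⟨c, rfl, ht, hcl⟩
    exact ⟨i, K.tup i, k, c, K.tup_mem i, ht, hcl, rfl⟩

theorem clSim_length {A B : Str L} {as bs : List ℕ}
    (h : ClSim A as B bs) : bs.length = as.length := by
  obtain ⟨h, hm, _⟩ := h
  rw [← hm, List.length_map]

/-! #### Bridges between `OCode` and Mathlib's partial recursive functions -/

theorem chi_empty : chi (∅ : Set ℕ) = pure 0 := by
  funext n; simp only [chi, Set.mem_empty_iff_false, if_false]; rfl

theorem exists_ocode_of_natPartrec {f : ℕ →. ℕ} (hf : Nat.Partrec f) (O : ℕ →. ℕ) :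
    ∃ c : OCode, OCode.eval O c = f := by
  induction hf with
  | zero => exact ⟨OCode.zero, rfl⟩
  | succ => exact ⟨OCode.succ, rfl⟩
  | left => exact ⟨OCode.left, rfl⟩
  | right => exact ⟨OCode.right, rfl⟩
  | pair _ _ ihf ihg =>
    obtain ⟨cf, hcf⟩ := ihf; obtain ⟨cg, hcg⟩ := ihg
    exact ⟨OCode.pair cf cg, by rw [← hcf, ← hcg]; rfl⟩
  | comp _ _ ihf ihg =>
    obtain ⟨cf, hcf⟩ := ihf; obtain ⟨cg, hcg⟩ := ihg
    exact ⟨OCode.comp cf cg, by rw [← hcf, ← hcg]; rfl⟩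
  | prec _ _ ihf ihg =>
    obtain ⟨cf, hcf⟩ := ihf; obtain ⟨cg, hcg⟩ := ihg
    exact ⟨OCode.prec cf cg, by rw [← hcf, ← hcg]; rfl⟩
  | rfind _ ih =>
    obtain ⟨cf, hcf⟩ := ih
    refine ⟨OCode.comp (OCode.rfind' cf)
      (OCode.pair (OCode.pair OCode.left OCode.right) OCode.zero), ?_⟩
    subst hcf
    funext a
    simp only [OCode.eval, Seq.seq, Part.map_eq_map, Part.bind_eq_bind, pure, PFun.pure,
      Part.bind_some, Part.map_some, PFun.coe_val, Nat.pair_unpair, Nat.unpaired,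
      Nat.unpair_pair, Nat.add_zero]
    exact Part.map_id' (fun x => rfl) _

theorem natPartrec_eval_chiEmpty (c : OCode) :
    Nat.Partrec (OCode.eval (chi ∅) c) := by
  induction c with
  | zero => exact Nat.Partrec.zero
  | succ => exact Nat.Partrec.succ
  | left => exact Nat.Partrec.left
  | right => exact Nat.Partrec.right
  | oracle => rw [chi_empty]; exact Nat.Partrec.zero
  | pair cf cg ihf ihg => exact ihf.pair ihg
  | comp cf cg ihf ihg => exact ihf.comp ihg
  | prec cf cg ihf ihg => exact ihf.prec ihg
  | rfind' cf ih => exact ih.rfind'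

/-- The tuple-coding function of a computable age is computable. -/
theorem exists_tup_fun (K : CompAge L) (hd : CEIn ∅ K.diag) :
    ∃ T : ℕ → ℕ, Computable T ∧ ∀ i, T i = Encodable.encode (K.tup i) := by
  obtain ⟨cd, hcd⟩ := hd
  obtain ⟨c₀, hc₀⟩ := Nat.Partrec.Code.exists_code.1 (natPartrec_eval_chiEmpty cd)
  classical
  let p : ℕ → ℕ → Bool := fun i s =>
    (Nat.Partrec.Code.evaln s.unpair.2 c₀ (Nat.pair 0 (Nat.pair i s.unpair.1))).isSome
  have hdom : ∀ i m, (Nat.Partrec.Code.eval c₀ (Nat.pair 0 (Nat.pair i m))).Dom ↔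
      Nat.pair 0 (Nat.pair i m) ∈ K.diag := by
    intro i m
    rw [hc₀]
    exact (hcd _).symm
  have hex : ∀ i, ∃ s, p i s = true := by
    intro i
    have hmem : (Nat.Partrec.Code.eval c₀
        (Nat.pair 0 (Nat.pair i (Encodable.encode (K.tup i))))).Dom :=
      (hdom i _).2 (tup_code_mem K i)
    obtain ⟨v, hv⟩ := Part.dom_iff_mem.1 hmem
    obtain ⟨t, ht⟩ := Nat.Partrec.Code.evaln_complete.1 hv
    refine ⟨Nat.pair (Encodable.encode (K.tup i)) t, ?_⟩
    have hs : (Nat.Partrec.Code.evaln t c₀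
        (Nat.pair 0 (Nat.pair i (Encodable.encode (K.tup i))))).isSome :=
      Option.isSome_iff_exists.2 ⟨v, Option.mem_def.1 ht⟩
    simpa [p, Nat.unpair_pair] using hs
  have hval : ∀ i s, p i s = true → s.unpair.1 = Encodable.encode (K.tup i) := by
    intro i s hs
    obtain ⟨v, hv⟩ := Option.isSome_iff_exists.1 hs
    have : v ∈ Nat.Partrec.Code.eval c₀ (Nat.pair 0 (Nat.pair i s.unpair.1)) :=
      Nat.Partrec.Code.evaln_complete.2 ⟨_, hv⟩
    exact tup_code_unique K ((hdom i _).1 (Part.dom_iff_mem.2 ⟨v, this⟩))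
  -- computability of the search
  have hp : Computable₂ p := by
    have h1 : Primrec₂ p := by
      unfold p
      exact Primrec.option_isSome.comp
        (Nat.Partrec.Code.primrec_evaln.comp <|
          ((Primrec.snd.comp (Primrec.unpair.comp Primrec.snd)).pair
            (Primrec.const c₀)).pair
          (Primrec₂.natPair.comp (Primrec.const 0)
            (Primrec₂.natPair.comp Primrec.fst
              (Primrec.fst.comp (Primrec.unpair.comp Primrec.snd)))))
    exact h1.to_comp
  have hS : Partrec fun i => Nat.rfind (fun s => (p i s : Part Bool)) :=
    Partrec.rfind hp.partrec₂
  have hSc : Computable fun i => Nat.find (hex i) := by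
    refine hS.of_eq_tot fun i => Nat.mem_rfind.2 ⟨?_, fun {m} hm => ?_⟩
    · simp [Nat.find_spec (hex i)]
    · have := Nat.find_min (hex i) hm
      simp only [Bool.not_eq_true] at this
      simp [this]
  refine ⟨fun i => (Nat.find (hex i)).unpair.1,
    (Primrec.fst.comp Primrec.unpair).to_comp.comp hSc, fun i => ?_⟩
  exact hval i _ (Nat.find_spec (hex i))

theorem chi_eq (O : Set ℕ) (q : ℕ) : chi O q = Part.some (if q ∈ O then 1 else 0) := rfl

/-- Evaluation of the two-query code. -/
theorem eval_query_code (O : Set ℕ) {Aq Fin2 : ℕ → ℕ} {cA cF : OCode}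
    (hA : OCode.eval (chi O) cA = ↑Aq) (hF : OCode.eval (chi O) cF = ↑Fin2) (x : ℕ) :
    OCode.eval (chi O)
      (OCode.comp cF (OCode.pair (OCode.comp OCode.oracle (OCode.comp OCode.left cA))
        (OCode.comp OCode.oracle (OCode.comp OCode.right cA)))) x
    = Part.some (Fin2 (Nat.pair (if (Aq x).unpair.1 ∈ O then 1 else 0)
        (if (Aq x).unpair.2 ∈ O then 1 else 0))) := by
  simp only [OCode.eval, hA, hF, Seq.seq, PFun.coe_val, Part.bind_eq_bind, Part.bind_some,
    Part.map_eq_map, Part.map_some, chi_eq, Part.bind_some]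
  have hsb : ∀ (a : ℕ) (g : ℕ →. ℕ), Part.some a >>= g = g a := fun a g => Part.bind_some _ _
  simp only [hsb, PFun.coe_val, chi_eq, Part.map_some, Part.bind_some]

/-- Evaluation of the search code. -/
theorem eval_search_code {O : Set ℕ} {cu : OCode} {v : ℕ → ℕ → ℕ}
    (hu : ∀ a n, OCode.eval (chi O) cu (Nat.pair a n) = Part.some (v a n))
    (a : ℕ) (hex : ∃ n, v a n = 0) :
    OCode.eval (chi O)
      (OCode.comp (OCode.rfind' cu)
        (OCode.pair (OCode.pair OCode.left OCode.right) OCode.zero)) a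
    = Part.some (Nat.find hex) := by
  have h1 : OCode.eval (chi O)
      (OCode.pair (OCode.pair OCode.left OCode.right) OCode.zero) a
      = Part.some (Nat.pair a 0) := by
    simp [OCode.eval, Seq.seq, PFun.pure, Nat.pair_unpair, pure]
  rw [Part.eq_some_iff]
  show Nat.find hex ∈ OCode.eval (chi O) _ a >>= _
  refine Part.mem_bind_iff.2 ⟨Nat.pair a 0, Part.eq_some_iff.1 h1, ?_⟩
  have h2 : OCode.eval (chi O) (OCode.rfind' cu) (Nat.pair a 0) =
      (Nat.rfind fun n =>
        (fun m => m = 0) <$> OCode.eval (chi O) cu (Nat.pair a (n + 0))).map (· + 0) := by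
    simp only [OCode.eval, Nat.unpaired, Nat.unpair_pair]
  rw [h2]
  refine (Part.mem_map_iff _).2 ⟨Nat.find hex, ?_, rfl⟩
  refine Nat.mem_rfind.2 ⟨?_, fun {m} hm => ?_⟩
  · rw [Nat.add_zero, hu a (Nat.find hex)]
    simp [Nat.find_spec hex]
  · rw [Nat.add_zero, hu a m]
    simp [Nat.find_min hex hm]

/-- Evaluation of the final code. -/
theorem eval_final_code {O : Set ℕ} {cB crf : OCode} {Bq : ℕ → ℕ} {n₀ : ℕ}
    (hB : OCode.eval (chi O) cB = ↑Bq) (a : ℕ)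
    (hrf : OCode.eval (chi O) crf a = Part.some n₀) :
    OCode.eval (chi O)
      (OCode.comp cB (OCode.pair (OCode.pair OCode.left OCode.right) crf)) a
    = Part.some (Bq (Nat.pair a n₀)) := by
  simp [OCode.eval, Seq.seq, hB, hrf, PFun.coe_val, Nat.pair_unpair]
  exact Part.bind_some _ _

theorem if_one_eq {P Q : Prop} [Decidable P] [Decidable Q] :
    (2 - ((if P then 1 else 0) + (if Q then 1 else 0)) = 0) ↔ (P ∧ Q) := by
  by_cases hp : P <;> by_cases hq : Q <;> simp [hp, hq]

end Aux

/-- A computable age with JEP has `CJEP(d)` where `d` is the degree of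
its embedding information. -/
theorem JEP_implies_CJEP_embedinfo {L : Lang} (hL : L.ComputableRep)
    (K : CompAge L) (hK : AgeComputableIn ∅ K)
    (hJEP : JEP K.cls) :
    CJEP (EmbedInfo K) K := by
  classical
  obtain ⟨T, hTc, hTval⟩ := exists_tup_fun K hK.1
  set O : Set ℕ := EmbedInfo K with hO
  -- the query-producing function and the output-producing function
  set Aq : ℕ → ℕ := fun x =>
    Nat.pair
      (Nat.pair x.unpair.1.unpair.1 (Nat.pair (T x.unpair.1.unpair.1)
        (Nat.pair x.unpair.2.unpair.1 x.unpair.2.unpair.2.unpair.1)))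
      (Nat.pair x.unpair.1.unpair.2 (Nat.pair (T x.unpair.1.unpair.2)
        (Nat.pair x.unpair.2.unpair.1 x.unpair.2.unpair.2.unpair.2))) with hAqdef
  set Bq : ℕ → ℕ := fun x =>
    Nat.pair
      (Nat.pair x.unpair.1.unpair.1
        (Nat.pair x.unpair.2.unpair.1 x.unpair.2.unpair.2.unpair.1))
      (Nat.pair x.unpair.1.unpair.2
        (Nat.pair x.unpair.2.unpair.1 x.unpair.2.unpair.2.unpair.2)) with hBqdef
  set Fin2 : ℕ → ℕ := fun v => 2 - (v.unpair.1 + v.unpair.2) with hFdef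
  -- computability of the helpers
  have hu1 : Computable fun x : ℕ => x.unpair.1 := (Primrec.fst.comp Primrec.unpair).to_comp
  have hu2 : Computable fun x : ℕ => x.unpair.2 := (Primrec.snd.comp Primrec.unpair).to_comp
  have hpair : Computable₂ Nat.pair := Primrec₂.natPair.to_comp
  have hii : Computable fun x : ℕ => x.unpair.1.unpair.1 := hu1.comp hu1
  have hjj : Computable fun x : ℕ => x.unpair.1.unpair.2 := hu2.comp hu1
  have hk : Computable fun x : ℕ => x.unpair.2.unpair.1 := hu1.comp hu2
  have hcc : Computable fun x : ℕ => x.unpair.2.unpair.2.unpair.1 :=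
    hu1.comp (hu2.comp hu2)
  have hdc : Computable fun x : ℕ => x.unpair.2.unpair.2.unpair.2 :=
    hu2.comp (hu2.comp hu2)
  have hAq : Computable Aq :=
    hpair.comp
      (hpair.comp hii (hpair.comp (hTc.comp hii) (hpair.comp hk hcc)))
      (hpair.comp hjj (hpair.comp (hTc.comp hjj) (hpair.comp hk hdc)))
  have hBq : Computable Bq :=
    hpair.comp
      (hpair.comp hii (hpair.comp hk hcc))
      (hpair.comp hjj (hpair.comp hk hdc))
  have hFin : Computable Fin2 :=
    (Primrec.nat_sub.comp (Primrec.const 2)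
      (Primrec.nat_add.comp (Primrec.fst.comp Primrec.unpair)
        (Primrec.snd.comp Primrec.unpair))).to_comp
  obtain ⟨cA, hcA⟩ := exists_ocode_of_natPartrec (Partrec.nat_iff.1 hAq.partrec) (chi O)
  obtain ⟨cB, hcB⟩ := exists_ocode_of_natPartrec (Partrec.nat_iff.1 hBq.partrec) (chi O)
  obtain ⟨cF, hcF⟩ := exists_ocode_of_natPartrec (Partrec.nat_iff.1 hFin.partrec) (chi O)
  set cu : OCode := OCode.comp cF
    (OCode.pair (OCode.comp OCode.oracle (OCode.comp OCode.left cA))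
      (OCode.comp OCode.oracle (OCode.comp OCode.right cA))) with hcu
  set crf : OCode := OCode.comp (OCode.rfind' cu)
    (OCode.pair (OCode.pair OCode.left OCode.right) OCode.zero) with hcrf
  refine ⟨OCode.comp cB (OCode.pair (OCode.pair OCode.left OCode.right) crf),
    fun i j => ?_⟩
  -- the value function of the test code
  set v : ℕ → ℕ → ℕ := fun a n =>
    2 - ((if (Aq (Nat.pair a n)).unpair.1 ∈ O then 1 else 0) +
         (if (Aq (Nat.pair a n)).unpair.2 ∈ O then 1 else 0)) with hv
  have hucomp : ∀ a n, OCode.eval (chi O) cu (Nat.pair a n) = Part.some (v a n) := by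
    intro a n
    rw [hcu, eval_query_code O hcA hcF (Nat.pair a n)]
    rw [hv, hFdef]
    simp only [Nat.unpair_pair]
  set a : ℕ := Nat.pair i j with ha
  -- the two queries for a given search point
  have hq1 : ∀ n : ℕ, (Aq (Nat.pair a n)).unpair.1 =
      Nat.pair i (Nat.pair (Encodable.encode (K.tup i))
        (Nat.pair n.unpair.1 n.unpair.2.unpair.1)) := by
    intro n
    rw [hAqdef]
    simp only [Nat.unpair_pair, ha, hTval]
  have hq2 : ∀ n : ℕ, (Aq (Nat.pair a n)).unpair.2 =
      Nat.pair j (Nat.pair (Encodable.encode (K.tup j))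
        (Nat.pair n.unpair.1 n.unpair.2.unpair.2)) := by
    intro n
    rw [hAqdef]
    simp only [Nat.unpair_pair, ha, hTval]
  -- existence of a successful search point
  have hex : ∃ n, v a n = 0 := by
    obtain ⟨k, c, d, htc, htd, hsc, hsd⟩ := exists_jep_witness K hJEP i j
    refine ⟨Nat.pair k (Nat.pair (Encodable.encode c) (Encodable.encode d)), ?_⟩
    rw [hv]
    simp only []
    rw [if_one_eq]
    constructor
    · rw [hq1]
      simp only [Nat.unpair_pair]
      exact (embedInfo_query K i k _).2 ⟨c, rfl, htc, hsc⟩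
    · rw [hq2]
      simp only [Nat.unpair_pair]
      exact (embedInfo_query K j k _).2 ⟨d, rfl, htd, hsd⟩
  obtain ⟨n₀, hrf, hP⟩ : ∃ n₀ : ℕ, OCode.eval (chi O) crf a = Part.some n₀ ∧ v a n₀ = 0 := by
    refine ⟨Nat.find hex, ?_, Nat.find_spec hex⟩
    rw [hcrf]
    exact eval_search_code hucomp a hex
  have hPiff : (Aq (Nat.pair a n₀)).unpair.1 ∈ O ∧ (Aq (Nat.pair a n₀)).unpair.2 ∈ O := by
    rw [hv] at hP
    exact if_one_eq.1 hP
  obtain ⟨hm1, hm2⟩ := hPiff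
  rw [hq1] at hm1
  rw [hq2] at hm2
  obtain ⟨c, hcenc, htc, hsc⟩ := (embedInfo_query K i n₀.unpair.1 _).1 hm1
  obtain ⟨d, hdenc, htd, hsd⟩ := (embedInfo_query K j n₀.unpair.1 _).1 hm2
  refine ⟨⟨i, n₀.unpair.1, c⟩, ⟨j, n₀.unpair.1, d⟩, ?_, ?_, ?_, ?_, ?_, rfl, rfl, rfl⟩
  · -- evaluation of the final code
    have hBval : Bq (Nat.pair a n₀) =
        Nat.pair (Nat.pair i (Nat.pair n₀.unpair.1 n₀.unpair.2.unpair.1))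
          (Nat.pair j (Nat.pair n₀.unpair.1 n₀.unpair.2.unpair.2)) := by
      rw [hBqdef, ha]
      simp only [Nat.unpair_pair]
    rw [eval_final_code hcB a hrf, hBval, ← hcenc, ← hdenc]
    rfl
  · exact ⟨clSim_length hsc, htc⟩
  · exact ⟨clSim_length hsd, htd⟩
  · exact hsc
  · exact hsd

end CFL
end

section
/- Let M be a cofinally ultrahomogeneous structure for a cofinal collection E, i.e., every isomorphism between substructures generated by members of E extends to an automorphism of M. If 𝐚 ∈ E, then the substructure of M generated by 𝐚 is an amalgamation base in the age of M. -/
/- Self-contained framework for computable ages and cofinal Fraïssé limits. -/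

namespace CFL

open Classical

variable {L : Lang}

/-! ### Auxiliary lemmas for Statement 16 -/

section Aux

variable {L : Lang}

private lemma exists_preimage_list {α β : Type*} {p : α → Prop} {f : α → β} :
    ∀ {l : List β}, (∀ b ∈ l, ∃ a, p a ∧ f a = b) →
      ∃ l' : List α, (∀ a ∈ l', p a) ∧ l'.map f = l
  | [], _ => ⟨[], by simp, by simp⟩
  | b :: l, h => by
    obtain ⟨a, hpa, hfa⟩ := h b (by simp)
    obtain ⟨l', hl', hml'⟩ :=
      exists_preimage_list (fun b hb => h b (List.mem_cons_of_mem _ hb))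
    refine ⟨a :: l', ?_, ?_⟩
    · intro x hx
      rcases List.mem_cons.1 hx with rfl | hx
      · exact hpa
      · exact hl' x hx
    · simp [hfa, hml']

private lemma map_eq_self_forall {α : Type*} {f : α → α} :
    ∀ {l : List α}, l.map f = l → ∀ a ∈ l, f a = a
  | [], _, a, ha => absurd ha List.not_mem_nil
  | b :: l, h, a, ha => by
    simp only [List.map_cons, List.cons.injEq] at h
    rcases List.mem_cons.1 ha with rfl | ha
    · exact h.1
    · exact map_eq_self_forall h.2 a ha

lemma inclosure_mono {M : Str L} {s t : List ℕ} (hst : ∀ x ∈ s, InClosure M t x)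
    {x : ℕ} (hx : InClosure M s x) : InClosure M t x := by
  induction hx with
  | base hxs _ => exact hst _ hxs
  | fn f as ha _ ih => exact InClosure.fn f as ha ih

lemma fix_closure {M : Str L} {s : List ℕ} {k : ℕ → ℕ}
    (hfix : ∀ a ∈ s, k a = a)
    (h4 : ∀ f t, L.funArity f = some t.length → (∀ x ∈ t, InClosure M s x) →
        k (M.fn f t) = M.fn f (t.map k))
    {x : ℕ} (hx : InClosure M s x) : k x = x := by
  induction hx with
  | base hxs _ => exact hfix _ hxs
  | fn f t ha hall ih =>
    rw [h4 f t ha hall]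
    have h5 : t.map k = t.map id := List.map_congr_left ih
    rw [h5, List.map_id]

lemma id_iso (A : Str L) : IsIsoMap A A id :=
  ⟨⟨fun _ hx => hx, fun _ _ _ _ h => h, fun r t _ => by rw [List.map_id],
    fun f t _ _ => by rw [List.map_id]; rfl⟩, fun y hy => ⟨y, hy, rfl⟩⟩

lemma partial_emb_clsim {M : Str L} {s : List ℕ} (hs : TupleIn M s) (e : ℕ → ℕ)
    (h1 : ∀ x, InClosure M s x → e x ∈ M.dom)
    (h2 : ∀ x, InClosure M s x → ∀ y, InClosure M s y → e x = e y → x = y)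
    (h3 : ∀ r t, (∀ x ∈ t, InClosure M s x) → (M.rel r t ↔ M.rel r (t.map e)))
    (h4 : ∀ f t, L.funArity f = some t.length → (∀ x ∈ t, InClosure M s x) →
        e (M.fn f t) = M.fn f (t.map e)) :
    TupleIn M (s.map e) ∧ IsIsoMap (M.sub s) (M.sub (s.map e)) e := by
  have fwd : ∀ x, InClosure M s x → InClosure M (s.map e) (e x) := by
    intro x hx
    induction hx with
    | base hxs hxd =>
      exact InClosure.base (List.mem_map_of_mem hxs)
        (h1 _ (InClosure.base hxs hxd))
    | fn f t ha hall ih =>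
      rw [h4 f t ha hall]
      refine InClosure.fn f (t.map e) (by simpa using ha) ?_
      intro y hy
      obtain ⟨z, hz, rfl⟩ := List.mem_map.1 hy
      exact ih z hz
  have bwd : ∀ x, InClosure M (s.map e) x → ∃ y, InClosure M s y ∧ e y = x := by
    intro x hx
    induction hx with
    | base hxs _ =>
      obtain ⟨y, hy, rfl⟩ := List.mem_map.1 hxs
      exact ⟨y, InClosure.base hy (hs y hy), rfl⟩
    | fn f t ha _ ih =>
      obtain ⟨t₀, ht₀, rfl⟩ :=
        exists_preimage_list (p := fun y => InClosure M s y) (f := e) ih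
      exact ⟨M.fn f t₀, InClosure.fn f t₀ (by simpa using ha) ht₀,
        h4 f t₀ (by simpa using ha) ht₀⟩
  have hTs' : TupleIn M (s.map e) := by
    intro x hx
    obtain ⟨y, hy, rfl⟩ := List.mem_map.1 hx
    exact h1 _ (InClosure.base hy (hs y hy))
  refine ⟨hTs', ⟨⟨fun x hx => fwd x hx, fun x hx y hy h => h2 x hx y hy h, ?_, ?_⟩, ?_⟩⟩
  · intro r t ht
    show M.rel r t ∧ _ ↔ M.rel r (t.map e) ∧ _
    constructor
    · rintro ⟨hr, -⟩
      refine ⟨(h3 r t ht).1 hr, ?_⟩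
      intro z hz
      obtain ⟨y, hy, rfl⟩ := List.mem_map.1 hz
      exact fwd y (ht y hy)
    · rintro ⟨hr, -⟩
      exact ⟨(h3 r t ht).2 hr, ht⟩
  · intro f t ha ht
    exact h4 f t ha ht
  · intro y hy
    obtain ⟨x, hx, rfl⟩ := bwd y hy
    exact ⟨x, hx, rfl⟩

lemma iso_inv {A B : Str L} {h : ℕ → ℕ} (hh : IsIsoMap A B h) :
    ∃ h' : ℕ → ℕ, IsIsoMap B A h' ∧ (∀ x ∈ A.dom, h' (h x) = x) ∧
      (∀ y ∈ B.dom, h (h' y) = y) := by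
  classical
  obtain ⟨⟨hdom, hinj, hrel, hfn⟩, hsurj⟩ := hh
  have hex : ∀ y : ℕ, ∃ x : ℕ, y ∈ B.dom → x ∈ A.dom ∧ h x = y := by
    intro y
    by_cases hy : y ∈ B.dom
    · obtain ⟨x, hx, hxy⟩ := hsurj y hy
      exact ⟨x, fun _ => ⟨hx, hxy⟩⟩
    · exact ⟨0, fun hy' => absurd hy' hy⟩
  choose h' hh' using hex
  have hinvdom : ∀ y ∈ B.dom, h' y ∈ A.dom := fun y hy => (hh' y hy).1
  have hright : ∀ y ∈ B.dom, h (h' y) = y := fun y hy => (hh' y hy).2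
  have hleft : ∀ x ∈ A.dom, h' (h x) = x := by
    intro x hx
    exact hinj _ (hinvdom _ (hdom x hx)) _ hx (hright _ (hdom x hx))
  have hmapback : ∀ t : List ℕ, TupleIn B t → (t.map h').map h = t := by
    intro t ht
    rw [List.map_map]
    have h5 : ∀ a ∈ t, (h ∘ h') a = id a := fun a ha => hright a (ht a ha)
    rw [List.map_congr_left h5, List.map_id]
  refine ⟨h', ⟨⟨hinvdom, ?_, ?_, ?_⟩, ?_⟩, hleft, hright⟩
  · intro y hy z hz hyz
    rw [← hright y hy, ← hright z hz, hyz]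
  · intro r t ht
    have ht' : TupleIn A (t.map h') := by
      intro z hz
      obtain ⟨y, hy, rfl⟩ := List.mem_map.1 hz
      exact hinvdom y (ht y hy)
    have h5 := hrel r (t.map h') ht'
    rw [hmapback t ht] at h5
    exact h5.symm
  · intro f t ha ht
    have ht' : TupleIn A (t.map h') := by
      intro z hz
      obtain ⟨y, hy, rfl⟩ := List.mem_map.1 hz
      exact hinvdom y (ht y hy)
    have ha' : L.funArity f = some (t.map h').length := by simpa using ha
    have h5 := hfn f (t.map h') ha' ht'
    rw [hmapback t ht] at h5
    rw [← h5]
    exact hleft _ (A.fn_mem f (t.map h') ha' ht')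
  · intro x hx
    exact ⟨h x, hdom x hx, hleft x hx⟩

end Aux

section Main

variable {L : Lang}

lemma emb_into_big {M B : Str L} {bs : List ℕ} (hTbs : TupleIn M bs) {h₀ g : ℕ → ℕ}
    (hh : IsIsoMap B (M.sub bs) h₀) (hg : IsAutoOf M g)
    {ts : List ℕ} (hTts : TupleIn M ts)
    (hsub : ∀ a ∈ bs, g a ∈ ts) :
    IsEmbMap B (M.sub ts) (fun x => g (h₀ x)) := by
  have gcl : ∀ x, InClosure M bs x → InClosure M ts (g x) := by
    intro x hx
    induction hx with
    | base hxs hxd => exact InClosure.base (hsub _ hxs) (hg.1.1 _ hxd)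
    | fn f t ha hall ih =>
      rw [hg.1.2.2.2 f t ha (fun z hz => (hall z hz).mem_dom)]
      refine InClosure.fn _ _ (by simpa using ha) ?_
      intro y hy
      obtain ⟨z, hz, rfl⟩ := List.mem_map.1 hy
      exact ih z hz
  have hBdom : ∀ x ∈ B.dom, InClosure M bs (h₀ x) := fun x hx => hh.1.1 x hx
  have hmapmap : ∀ t : List ℕ, (t.map h₀).map g = t.map (fun x => g (h₀ x)) := by
    intro t
    rw [List.map_map]
    rfl
  refine ⟨?_, ?_, ?_, ?_⟩
  · intro x hx
    exact gcl _ (hBdom x hx)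
  · intro x hx y hy hxy
    refine hh.1.2.1 x hx y hy ?_
    exact hg.1.2.1 _ (hBdom x hx).mem_dom _ (hBdom y hy).mem_dom hxy
  · intro r t ht
    have htB : TupleIn M (t.map h₀) := by
      intro z hz
      obtain ⟨y, hy, rfl⟩ := List.mem_map.1 hz
      exact (hBdom y (ht y hy)).mem_dom
    have h5 : B.rel r t ↔ (M.sub bs).rel r (t.map h₀) := hh.1.2.2.1 r t ht
    have h6 : M.rel r (t.map h₀) ↔ M.rel r ((t.map h₀).map g) :=
      hg.1.2.2.1 r (t.map h₀) htB
    rw [hmapmap t] at h6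
    constructor
    · intro hr
      refine ⟨h6.1 (h5.1 hr).1, ?_⟩
      intro z hz
      obtain ⟨y, hy, rfl⟩ := List.mem_map.1 hz
      exact gcl _ (hBdom y (ht y hy))
    · intro hr
      refine h5.2 ⟨h6.2 hr.1, ?_⟩
      intro z hz
      obtain ⟨y, hy, rfl⟩ := List.mem_map.1 hz
      exact hBdom y (ht y hy)
  · intro f t ha ht
    have htB : TupleIn M (t.map h₀) := by
      intro z hz
      obtain ⟨y, hy, rfl⟩ := List.mem_map.1 hz
      exact (hBdom y (ht y hy)).mem_dom
    show g (h₀ (B.fn f t)) = (M.sub ts).fn f (t.map (fun x => g (h₀ x)))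
    rw [hh.1.2.2.2 f t ha ht]
    show g (M.fn f (t.map h₀)) = M.fn f (t.map (fun x => g (h₀ x)))
    rw [hg.1.2.2.2 f (t.map h₀) (by simpa using ha) htB, hmapmap t]

lemma side_auto {M : Str L} {E : Set (List ℕ)} (hE : IsCofinalCollection M E)
    (hM : CofUltraFor M E) {as : List ℕ} (hasE : as ∈ E)
    {B : Str L} {bs : List ℕ} (hTbs : TupleIn M bs) {h₀ : ℕ → ℕ}
    (hh : IsIsoMap B (M.sub bs) h₀) {f : ℕ → ℕ} (hf : IsEmbMap (M.sub as) B f) :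
    ∃ g : ℕ → ℕ, IsAutoOf M g ∧ ∀ x, InClosure M as x → g (h₀ (f x)) = x := by
  have hTas : TupleIn M as := hE.1 as hasE
  have h1 : ∀ x, InClosure M as x → (fun x => h₀ (f x)) x ∈ M.dom := by
    intro x hx
    exact (hh.1.1 _ (hf.1 x hx)).mem_dom
  have h2 : ∀ x, InClosure M as x → ∀ y, InClosure M as y →
      (fun x => h₀ (f x)) x = (fun x => h₀ (f x)) y → x = y := by
    intro x hx y hy hxy
    exact hf.2.1 x hx y hy (hh.1.2.1 _ (hf.1 x hx) _ (hf.1 y hy) hxy)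
  have htBgen : ∀ t : List ℕ, (∀ x ∈ t, InClosure M as x) → TupleIn B (t.map f) := by
    intro t ht z hz
    obtain ⟨y, hy, rfl⟩ := List.mem_map.1 hz
    exact hf.1 y (ht y hy)
  have hmapmap : ∀ t : List ℕ, (t.map f).map h₀ = t.map (fun x => h₀ (f x)) := by
    intro t
    rw [List.map_map]
    rfl
  have h3 : ∀ r t, (∀ x ∈ t, InClosure M as x) →
      (M.rel r t ↔ M.rel r (t.map (fun x => h₀ (f x)))) := by
    intro r t ht
    have h5 : (M.sub as).rel r t ↔ B.rel r (t.map f) := hf.2.2.1 r t ht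
    have h6 : B.rel r (t.map f) ↔ (M.sub bs).rel r ((t.map f).map h₀) :=
      hh.1.2.2.1 r (t.map f) (htBgen t ht)
    rw [hmapmap t] at h6
    have hmm : ∀ z ∈ t.map (fun x => h₀ (f x)), InClosure M bs z := by
      intro z hz
      obtain ⟨y, hy, rfl⟩ := List.mem_map.1 hz
      exact hh.1.1 _ (hf.1 y (ht y hy))
    constructor
    · intro hr
      exact (h6.1 (h5.1 ⟨hr, ht⟩)).1
    · intro hr
      exact (h5.2 (h6.2 ⟨hr, hmm⟩)).1
  have h4 : ∀ f0 t, L.funArity f0 = some t.length → (∀ x ∈ t, InClosure M as x) →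
      (fun x => h₀ (f x)) (M.fn f0 t) = M.fn f0 (t.map (fun x => h₀ (f x))) := by
    intro f0 t ha ht
    show h₀ (f (M.fn f0 t)) = _
    have h5 : f (M.fn f0 t) = B.fn f0 (t.map f) := hf.2.2.2 f0 t ha ht
    rw [h5, hh.1.2.2.2 f0 (t.map f) (by simpa using ha) (htBgen t ht)]
    show M.fn f0 ((t.map f).map h₀) = _
    rw [hmapmap t]
  obtain ⟨hTas', hiso⟩ := partial_emb_clsim hTas (fun x => h₀ (f x)) h1 h2 h3 h4
  have has'E : (as.map fun x => h₀ (f x)) ∈ E :=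
    hE.2.2.2 as hasE _ hTas' ⟨_, rfl, hiso⟩
  obtain ⟨e', he', hleft, _⟩ := iso_inv hiso
  have hback : (as.map fun x => h₀ (f x)).map e' = as := by
    rw [List.map_map]
    have h5 : ∀ a ∈ as, (e' ∘ fun x => h₀ (f x)) a = id a := by
      intro a ha
      exact hleft a (InClosure.base ha (hTas a ha))
    rw [List.map_congr_left h5, List.map_id]
  obtain ⟨g, hgauto, hgmap⟩ := hM _ has'E as hasE ⟨e', hback, he'⟩
  refine ⟨g, hgauto, ?_⟩
  have hfixgen : ∀ a ∈ as, g (h₀ (f a)) = a := by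
    rw [List.map_map] at hgmap
    intro a ha
    exact map_eq_self_forall hgmap a ha
  have h4k : ∀ f0 t, L.funArity f0 = some t.length → (∀ x ∈ t, InClosure M as x) →
      (fun x => g (h₀ (f x))) (M.fn f0 t) = M.fn f0 (t.map (fun x => g (h₀ (f x)))) := by
    intro f0 t ha ht
    show g ((fun x => h₀ (f x)) (M.fn f0 t)) = _
    rw [h4 f0 t ha ht]
    have hTte : TupleIn M (t.map (fun x => h₀ (f x))) := by
      intro z hz
      obtain ⟨y, hy, rfl⟩ := List.mem_map.1 hz
      exact h1 y (ht y hy)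
    rw [hgauto.1.2.2.2 f0 _ (by simpa using ha) hTte, List.map_map]
    rfl
  intro x hx
  exact fix_closure (k := fun x => g (h₀ (f x))) hfixgen h4k hx

end Main

/-- If `M` is cofinally ultrahomogeneous for a cofinal collection `E`,
then the substructure generated by any member of `E` is an amalgamation base in the age
of `M`. -/
theorem cofultra_gives_amalg_bases {L : Lang} (M : Str L) (E : Set (List ℕ))
    (hE : IsCofinalCollection M E) (hM : CofUltraFor M E) :
    ∀ as ∈ E, AmalgBase (ageOf M) (M.sub as) := by
  intro as hasE
  have hTas : TupleIn M as := hE.1 as hasE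
  refine ⟨⟨as, hTas, id, id_iso _⟩, ?_⟩
  intro B₀ hB₀ B₁ hB₁ f₀ f₁ hf₀ hf₁
  obtain ⟨bs₀, hTbs₀, h₀, hh₀⟩ := hB₀
  obtain ⟨bs₁, hTbs₁, h₁, hh₁⟩ := hB₁
  obtain ⟨g₀, hg₀, hfix₀⟩ := side_auto hE hM hasE hTbs₀ hh₀ hf₀
  obtain ⟨g₁, hg₁, hfix₁⟩ := side_auto hE hM hasE hTbs₁ hh₁ hf₁
  have hTts : TupleIn M (bs₀.map g₀ ++ bs₁.map g₁) := by
    intro x hx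
    rcases List.mem_append.1 hx with hx | hx
    · obtain ⟨y, hy, rfl⟩ := List.mem_map.1 hx
      exact hg₀.1.1 _ (hTbs₀ y hy)
    · obtain ⟨y, hy, rfl⟩ := List.mem_map.1 hx
      exact hg₁.1.1 _ (hTbs₁ y hy)
  refine ⟨M.sub (bs₀.map g₀ ++ bs₁.map g₁), ⟨_, hTts, id, id_iso _⟩,
    (fun x => g₀ (h₀ x)), (fun x => g₁ (h₁ x)), ?_, ?_, ?_⟩
  · exact emb_into_big hTbs₀ hh₀ hg₀ hTts
      (fun a ha => List.mem_append.2 (Or.inl (List.mem_map_of_mem ha)))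
  · exact emb_into_big hTbs₁ hh₁ hg₁ hTts
      (fun a ha => List.mem_append.2 (Or.inr (List.mem_map_of_mem ha)))
  · intro x hx
    show g₀ (h₀ (f₀ x)) = g₁ (h₁ (f₁ x))
    rw [hfix₀ x hx, hfix₁ x hx]


end CFL
end

section
/- Let M be a cofinally ultrahomogeneous structure, let A₀, A₁ ⊆ M be finitely generated substructures that are amalgamation bases in the age of M, and suppose k: A₀ → A₁ is an isomorphism. Then there is an automorphism g of M whose restriction to A₀ equals k. -/
/- Self-contained framework for computable ages and cofinal Fraïssé limits. -/

namespace CFL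

open Classical

variable {L : Lang}

/-! ### Auxiliary lemmas for Statement 17 -/

section Aux17

variable {L : Lang}

theorem closure_mono {M : Str L} {s t : List ℕ}
    (hst : ∀ x ∈ s, InClosure M t x) : ∀ {x}, InClosure M s x → InClosure M t x := by
  intro x hx
  induction hx with
  | base hxs _ => exact hst _ hxs
  | fn f as ha _ ih => exact InClosure.fn f as ha ih

theorem emb_comp {A B C : Str L} {f g : ℕ → ℕ}
    (hf : IsEmbMap A B f) (hg : IsEmbMap B C g) : IsEmbMap A C (fun x => g (f x)) := by
  obtain ⟨hf1, hf2, hf3, hf4⟩ := hf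
  obtain ⟨hg1, hg2, hg3, hg4⟩ := hg
  refine ⟨fun x hx => hg1 _ (hf1 _ hx),
    fun x hx y hy h => hf2 _ hx _ hy (hg2 _ (hf1 _ hx) _ (hf1 _ hy) h), ?_, ?_⟩
  · intro r as has
    have hmap : TupleIn B (as.map f) := by
      intro y hy
      obtain ⟨x, hx, rfl⟩ := List.mem_map.1 hy
      exact hf1 _ (has _ hx)
    rw [hf3 r as has, hg3 r (as.map f) hmap, List.map_map]
    rfl
  · intro fn as ha has
    have hmap : TupleIn B (as.map f) := by
      intro y hy
      obtain ⟨x, hx, rfl⟩ := List.mem_map.1 hy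
      exact hf1 _ (has _ hx)
    have ha' : L.funArity fn = some (as.map f).length := by simpa using ha
    show g (f (A.fn fn as)) = C.fn fn (as.map fun x => g (f x))
    rw [hf4 fn as ha has, hg4 fn (as.map f) ha' hmap, List.map_map]
    rfl

theorem sub_emb_id {M : Str L} (s : List ℕ) : IsEmbMap (M.sub s) M (fun x => x) := by
  refine ⟨fun x hx => InClosure.mem_dom hx, fun x _ y _ h => h, ?_, ?_⟩
  · intro r as has
    rw [List.map_id']
    exact ⟨fun h => h.1, fun h => ⟨h, has⟩⟩
  · intro f as ha has
    rw [List.map_id']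
    rfl

theorem sub_sub_emb {M : Str L} {s t : List ℕ}
    (hst : ∀ x ∈ s, InClosure M t x) : IsEmbMap (M.sub s) (M.sub t) (fun x => x) := by
  refine ⟨fun x hx => closure_mono hst hx, fun x _ y _ h => h, ?_, ?_⟩
  · intro r as has
    rw [List.map_id']
    exact ⟨fun h => ⟨h.1, fun x hx => closure_mono hst (has x hx)⟩,
      fun h => ⟨h.1, has⟩⟩
  · intro f as ha has
    rw [List.map_id']
    rfl

theorem eq_of_map_eq {f g : ℕ → ℕ} :
    ∀ {l : List ℕ}, l.map f = l.map g → ∀ x ∈ l, f x = g x := by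
  intro l
  induction l with
  | nil => intro _ x hx; cases hx
  | cons a l ih =>
    intro h x hx
    simp only [List.map_cons, List.cons.injEq] at h
    rcases List.mem_cons.1 hx with rfl | hx
    · exact h.1
    · exact ih h.2 x hx

theorem emb_map_eq_on_closure {M : Str L} {s : List ℕ} {f g : ℕ → ℕ}
    (hf : IsEmbMap (M.sub s) M f) (hg : IsEmbMap (M.sub s) M g)
    (hfg : ∀ x ∈ s, f x = g x) : ∀ {x}, InClosure M s x → f x = g x := by
  intro x hx
  induction hx with
  | base hxs _ => exact hfg _ hxs
  | fn fn as ha hcl ih =>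
    have has : TupleIn (M.sub s) as := hcl
    calc f (M.fn fn as) = M.fn fn (as.map f) := hf.2.2.2 fn as ha has
      _ = M.fn fn (as.map g) := by rw [List.map_congr_left ih]
      _ = g (M.fn fn as) := (hg.2.2.2 fn as ha has).symm

theorem list_choice {f : ℕ → ℕ} {P : ℕ → Prop} :
    ∀ (ts : List ℕ), (∀ t ∈ ts, ∃ x, P x ∧ f x = t) →
      ∃ xs : List ℕ, (∀ x ∈ xs, P x) ∧ xs.map f = ts := by
  intro ts
  induction ts with
  | nil => exact fun _ => ⟨[], by simp, rfl⟩
  | cons t ts ih =>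
    intro h
    obtain ⟨x, hx, hfx⟩ := h t (by simp)
    obtain ⟨xs, hxs, hmap⟩ := ih (fun t' ht' => h t' (by simp [ht']))
    refine ⟨x :: xs, ?_, by simp [hfx, hmap]⟩
    intro y hy
    rcases List.mem_cons.1 hy with rfl | hy
    · exact hx
    · exact hxs _ hy

theorem emb_image_iso {M : Str L} {s : List ℕ} {f : ℕ → ℕ}
    (hs : TupleIn M s) (hf : IsEmbMap (M.sub s) M f) :
    IsIsoMap (M.sub s) (M.sub (s.map f)) f := by
  have hdom : ∀ {x}, InClosure M s x → InClosure M (s.map f) (f x) := by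
    intro x hx
    induction hx with
    | base hxs hxd =>
      exact InClosure.base (List.mem_map_of_mem (f := f) hxs)
        (hf.1 _ (InClosure.base hxs hxd))
    | fn fn as ha hcl ih =>
      have heq : f (M.fn fn as) = M.fn fn (as.map f) := hf.2.2.2 fn as ha hcl
      rw [heq]
      refine InClosure.fn fn (as.map f) (by simpa using ha) ?_
      intro y hy
      obtain ⟨x, hx, rfl⟩ := List.mem_map.1 hy
      exact ih _ hx
  refine ⟨⟨fun x hx => hdom hx, fun x hx y hy h => hf.2.1 x hx y hy h, ?_, ?_⟩, ?_⟩
  · intro r as has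
    constructor
    · intro h
      refine ⟨(hf.2.2.1 r as has).1 h, ?_⟩
      intro y hy
      obtain ⟨x, hx, rfl⟩ := List.mem_map.1 hy
      exact hdom (has _ hx)
    · intro h
      exact (hf.2.2.1 r as has).2 h.1
  · intro fn as ha has
    exact hf.2.2.2 fn as ha has
  · intro y hy
    induction hy with
    | base hys hyd =>
      obtain ⟨x, hx, rfl⟩ := List.mem_map.1 hys
      exact ⟨x, InClosure.base hx (hs _ hx), rfl⟩
    | fn fn as ha hcl ih =>
      obtain ⟨xs, hxs, rfl⟩ := list_choice as ih
      refine ⟨M.fn fn xs, InClosure.fn fn xs (by simpa using ha) hxs, ?_⟩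
      exact hf.2.2.2 fn xs (by simpa using ha) hxs

theorem sub_mem_age {M : Str L} {s : List ℕ} (hs : TupleIn M s) :
    M.sub s ∈ ageOf M := by
  refine ⟨s, hs, (fun x => x), sub_sub_emb (fun x hx => InClosure.base hx (hs x hx)), ?_⟩
  exact fun y hy => ⟨y, hy, rfl⟩

theorem auto_emb_sub {M : Str L} {s : List ℕ} {g : ℕ → ℕ}
    (hg : IsAutoOf M g) : IsEmbMap (M.sub s) M g := by
  refine ⟨fun x hx => hg.1.1 _ (InClosure.mem_dom hx),
    fun x hx y hy h => hg.1.2.1 _ (InClosure.mem_dom hx) _ (InClosure.mem_dom hy) h,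
    ?_, ?_⟩
  · intro r as has
    have hT : TupleIn M as := fun x hx => InClosure.mem_dom (has x hx)
    exact ⟨fun h => (hg.1.2.2.1 r as hT).1 h.1,
      fun h => ⟨(hg.1.2.2.1 r as hT).2 h, has⟩⟩
  · intro fn as ha has
    exact hg.1.2.2.2 fn as ha (fun x hx => InClosure.mem_dom (has x hx))

theorem auto_inv {M : Str L} {g : ℕ → ℕ} (hg : IsAutoOf M g) :
    ∃ g' : ℕ → ℕ, IsAutoOf M g' ∧ (∀ x ∈ M.dom, g' (g x) = x) ∧
      ∀ y ∈ M.dom, g (g' y) = y := by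
  classical
  obtain ⟨⟨hmap, hinj, hrel, hfn⟩, hsurj⟩ := hg
  set g' : ℕ → ℕ := fun y => if h : ∃ x ∈ M.dom, g x = y then h.choose else y with hg'
  have hleft : ∀ x ∈ M.dom, g' (g x) = x := by
    intro x hx
    have h : ∃ x' ∈ M.dom, g x' = g x := ⟨x, hx, rfl⟩
    simp only [hg', dif_pos h]
    exact hinj _ h.choose_spec.1 _ hx h.choose_spec.2
  have hright : ∀ y ∈ M.dom, g (g' y) = y := by
    intro y hy
    obtain ⟨x, hx, hgx⟩ := hsurj y hy
    have h : ∃ x' ∈ M.dom, g x' = y := ⟨x, hx, hgx⟩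
    simp only [hg', dif_pos h]
    exact h.choose_spec.2
  have hdom' : ∀ y ∈ M.dom, g' y ∈ M.dom := by
    intro y hy
    obtain ⟨x, hx, hgx⟩ := hsurj y hy
    have h : ∃ x' ∈ M.dom, g x' = y := ⟨x, hx, hgx⟩
    simp only [hg', dif_pos h]
    exact h.choose_spec.1
  refine ⟨g', ⟨⟨hdom', ?_, ?_, ?_⟩, ?_⟩, hleft, hright⟩
  · intro x hx y hy h
    have h2 := congrArg g h
    rwa [hright _ hx, hright _ hy] at h2
  · intro r as has
    have hT' : TupleIn M (as.map g') := by
      intro y hy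
      obtain ⟨x, hx, rfl⟩ := List.mem_map.1 hy
      exact hdom' _ (has _ hx)
    have hmm : (as.map g').map g = as := by
      rw [List.map_map]
      exact (List.map_congr_left (fun a ha => hright a (has a ha))).trans
        (List.map_id _)
    have h2 := hrel r (as.map g') hT'
    rw [hmm] at h2
    exact h2.symm
  · intro fn as ha has
    have hT' : TupleIn M (as.map g') := by
      intro y hy
      obtain ⟨x, hx, rfl⟩ := List.mem_map.1 hy
      exact hdom' _ (has _ hx)
    have ha' : L.funArity fn = some (as.map g').length := by simpa using ha
    have hmm : (as.map g').map g = as := by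
      rw [List.map_map]
      exact (List.map_congr_left (fun a ha => hright a (has a ha))).trans
        (List.map_id _)
    apply hinj _ (hdom' _ (M.fn_mem fn as ha has)) _ (M.fn_mem fn (as.map g') ha' hT')
    rw [hright _ (M.fn_mem fn as ha has), hfn fn (as.map g') ha' hT', hmm]
  · intro y hy
    exact ⟨g y, hmap y hy, hleft y hy⟩

theorem auto_comp {M : Str L} {f g : ℕ → ℕ} (hf : IsAutoOf M f) (hg : IsAutoOf M g) :
    IsAutoOf M (fun x => g (f x)) := by
  refine ⟨emb_comp hf.1 hg.1, ?_⟩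
  intro y hy
  obtain ⟨x, hx, rfl⟩ := hg.2 y hy
  obtain ⟨z, hz, rfl⟩ := hf.2 x hx
  exact ⟨z, hz, rfl⟩

end Aux17

/-- In a cofinally ultrahomogeneous structure, every isomorphism
between finitely generated substructures that are amalgamation bases in the age extends
to an automorphism. -/
theorem iso_of_amalg_bases_extends {L : Lang} (M : Str L)
    (hM : CofinallyUltrahomogeneous M)
    (as₀ as₁ : List ℕ) (h₀ : TupleIn M as₀) (h₁ : TupleIn M as₁)
    (hb₀ : AmalgBase (ageOf M) (M.sub as₀))
    (hb₁ : AmalgBase (ageOf M) (M.sub as₁))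
    (k : ℕ → ℕ) (hk : IsIsoMap (M.sub as₀) (M.sub as₁) k) :
    ∃ g : ℕ → ℕ, IsAutoOf M g ∧ ∀ x, InClosure M as₀ x → g x = k x := by
  classical
  obtain ⟨bs, hbs, hclb, hhom⟩ := hM (as₀ ++ as₁) (by
    intro x hx
    rcases List.mem_append.1 hx with h | h
    exacts [h₀ _ h, h₁ _ h])
  have hcl0 : ∀ x ∈ as₀, InClosure M bs x :=
    fun x hx => hclb x (List.mem_append.2 (Or.inl hx))
  have hcl1 : ∀ x ∈ as₁, InClosure M bs x :=
    fun x hx => hclb x (List.mem_append.2 (Or.inr hx))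
  have hBage : M.sub bs ∈ ageOf M := sub_mem_age hbs
  have hf₀ : IsEmbMap (M.sub as₀) (M.sub bs) (fun x => x) := sub_sub_emb hcl0
  have hf₁ : IsEmbMap (M.sub as₀) (M.sub bs) (fun x => k x) := by
    have h := emb_comp hk.1 (sub_sub_emb hcl1)
    exact h
  obtain ⟨D, hD, g₀, g₁, hg₀, hg₁, hagree⟩ :=
    hb₀.2 (M.sub bs) hBage (M.sub bs) hBage _ _ hf₀ hf₁
  obtain ⟨ds, hds, θ, hθ⟩ := hD
  have he₀ : IsEmbMap (M.sub bs) M (fun x => θ (g₀ x)) := by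
    have h := emb_comp (emb_comp hg₀ hθ.1) (sub_emb_id ds)
    exact h
  have he₁ : IsEmbMap (M.sub bs) M (fun x => θ (g₁ x)) := by
    have h := emb_comp (emb_comp hg₁ hθ.1) (sub_emb_id ds)
    exact h
  have hT₀ : TupleIn M (bs.map fun x => θ (g₀ x)) := by
    intro y hy
    obtain ⟨x, hx, rfl⟩ := List.mem_map.1 hy
    exact he₀.1 _ (InClosure.base hx (hbs _ hx))
  have hT₁ : TupleIn M (bs.map fun x => θ (g₁ x)) := by
    intro y hy
    obtain ⟨x, hx, rfl⟩ := List.mem_map.1 hy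
    exact he₁.1 _ (InClosure.base hx (hbs _ hx))
  obtain ⟨α, hα, hαbs⟩ := hhom (bs.map fun x => θ (g₀ x)) hT₀
    ⟨fun x => θ (g₀ x), rfl, emb_image_iso hbs he₀⟩
  obtain ⟨β, hβ, hβbs⟩ := hhom (bs.map fun x => θ (g₁ x)) hT₁
    ⟨fun x => θ (g₁ x), rfl, emb_image_iso hbs he₁⟩
  obtain ⟨β', hβ', hβleft, _⟩ := auto_inv hβ
  refine ⟨fun x => β' (α x), auto_comp hα hβ', ?_⟩
  intro x hx
  have hxbs : InClosure M bs x := closure_mono hcl0 hx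
  have hkx : InClosure M as₁ (k x) := hk.1.1 x hx
  have hkxbs : InClosure M bs (k x) := closure_mono hcl1 hkx
  have hα_e : α x = θ (g₀ x) :=
    emb_map_eq_on_closure (auto_emb_sub hα) he₀ (eq_of_map_eq hαbs) hxbs
  have hβ_e : β (k x) = θ (g₁ (k x)) :=
    emb_map_eq_on_closure (auto_emb_sub hβ) he₁ (eq_of_map_eq hβbs) hkxbs
  have hagree' : g₀ x = g₁ (k x) := hagree x hx
  have hfinal : α x = β (k x) := by
    rw [hα_e, hβ_e, hagree']
  show β' (α x) = k x
  rw [hfinal]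
  exact hβleft _ (InClosure.mem_dom hkx)

end CFL
end
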